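/- Let G be a finite simple graph and f a uniformly random labeling with fixed label counts. Then the second moment of R_{ii} is E(R_{ii}^2) = |G| * p_2 + (sum_t |G_t|^2 - 2|G|) * p_3 + (|G|^2 - sum_t |G_t|^2 + |G|) * p_4, where p_m = n_i(n_i-1)...(n_i-m+1)/(N(N-1)...(N-m+1)). Consequently Var(R_{ii}) equals this expression minus (|G| n_i(n_i-1)/(N(N-1)))^2. -/

import Mathlib

open Finset

variable {V : Type*} [Fintype V] [DecidableEq V] {K : ℕ}

/-- The set of labelings `f : V → Fin K` with exactly `n k` vertices labeled `k`. -/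
def labelings (n : Fin K → ℕ) : Finset (V → Fin K) :=
  Finset.univ.filter fun f => ∀ k, (Finset.univ.filter fun x => f x = k).card = n k

/-- Probability of an event under the uniform distribution on `labelings n`. -/
noncomputable def prob (n : Fin K → ℕ) (P : (V → Fin K) → Prop) [DecidablePred P] : ℝ :=
  (((labelings n).filter P).card : ℝ) / (((labelings n : Finset (V → Fin K))).card : ℝ)

/-- Expectation of a real random variable under the uniform distribution on `labelings n`. -/
noncomputable def expect (n : Fin K → ℕ) (X : (V → Fin K) → ℝ) : ℝ :=
  (∑ f ∈ labelings n, X f) / (((labelings n : Finset (V → Fin K))).card : ℝ)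

/-- Covariance under the uniform distribution on `labelings n`. -/
noncomputable def covar (n : Fin K → ℕ) (X Y : (V → Fin K) → ℝ) : ℝ :=
  expect n (fun f => (X f - expect n X) * (Y f - expect n Y))

/-- `Rcount G f i j` is the number of edges of `G` whose endpoint labels (under `f`)
are exactly the unordered pair `{i, j}`. -/
def Rcount (G : SimpleGraph V) [DecidableRel G.Adj] (f : V → Fin K) (i j : Fin K) : ℕ :=
  (G.edgeFinset.filter fun e => Sym2.map f e = s(i, j)).card

set_option linter.unusedSectionVars false

/-- vertex set of a Sym2 as a Finset -/
def everts (e : Sym2 V) : Finset V := Finset.univ.filter (· ∈ e)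

@[simp] lemma mem_everts {e : Sym2 V} {v : V} : v ∈ everts e ↔ v ∈ e := by
  simp [everts]

lemma everts_mk (a b : V) : everts (s(a,b)) = {a, b} := by
  ext v; simp [everts, Sym2.mem_iff]

lemma card_everts {a b : V} (h : a ≠ b) : (everts (s(a,b))).card = 2 := by
  rw [everts_mk]; exact card_pair h

lemma everts_inj {e e' : Sym2 V} (he : ¬ e.IsDiag) (h : everts e = everts e') : e = e' := by
  induction e with | _ a b =>
  induction e' with | _ c d =>
  rw [Sym2.mk_isDiag_iff] at he
  rw [everts_mk, everts_mk] at h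
  have ha : a = c ∨ a = d := by have := (Finset.ext_iff.mp h a).mp (by simp); simpa using this
  have hb : b = c ∨ b = d := by have := (Finset.ext_iff.mp h b).mp (by simp); simpa using this
  rw [Sym2.eq_iff]
  rcases ha with rfl|rfl <;> rcases hb with rfl|rfl <;> simp_all

lemma eq_of_two_mem {e e' : Sym2 V} (he : ¬ e.IsDiag) (he' : ¬ e'.IsDiag)
    {x y : V} (hxy : x ≠ y) (hx : x ∈ e) (hy : y ∈ e) (hx' : x ∈ e') (hy' : y ∈ e') :
    e = e' := by
  have h1 : everts e = {x, y} := by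
    have : ({x, y} : Finset V) ⊆ everts e := by
      intro v hv; simp at hv; rcases hv with rfl|rfl <;> simpa
    refine (Finset.eq_of_subset_of_card_le this ?_).symm
    induction e with | _ a b =>
    rw [card_everts (by simpa [Sym2.mk_isDiag_iff] using he), card_pair hxy]
  have h2 : everts e' = {x, y} := by
    have : ({x, y} : Finset V) ⊆ everts e' := by
      intro v hv; simp at hv; rcases hv with rfl|rfl <;> simpa
    refine (Finset.eq_of_subset_of_card_le this ?_).symm
    induction e' with | _ a b =>
    rw [card_everts (by simpa [Sym2.mk_isDiag_iff] using he'), card_pair hxy]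
  exact everts_inj he (h1.trans h2.symm)

lemma comp_mem_labelings {n : Fin K → ℕ} {f : V → Fin K} (hf : f ∈ labelings n)
    (σ : Equiv.Perm V) : (f ∘ σ) ∈ labelings n := by
  simp only [labelings, mem_filter, mem_univ, true_and] at hf ⊢
  intro k
  rw [← hf k]
  apply Finset.card_bij (fun x _ => σ x)
  · intro a ha; simp_all
  · intro a _ b _ hab; exact σ.injective hab
  · intro b hb; exact ⟨σ.symm b, by simp_all, by simp⟩

/-- number of labelings constant `i` on `S` -/
def cFix (n : Fin K → ℕ) (i : Fin K) (S : Finset V) : ℕ :=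
  ((labelings n).filter (fun f => ∀ v ∈ S, f v = i)).card

lemma cFix_congr (n : Fin K → ℕ) (i : Fin K) {S T : Finset V} (h : S.card = T.card) :
    cFix n i S = cFix n i T := by
  classical
  have e : {x // x ∈ T} ≃ {x // x ∈ S} := Finset.equivOfCardEq h.symm
  set σ : Equiv.Perm V := e.extendSubtype with hσ
  have hmem : ∀ v ∈ T, σ v ∈ S := fun v hv => e.extendSubtype_mem v hv
  have hmem' : ∀ v ∈ S, σ.symm v ∈ T := by
    intro v hv
    by_contra hc
    have : σ (σ.symm v) ∉ S := by
      rw [e.extendSubtype_apply_of_not_mem _ hc]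
      exact (e.toCompl ⟨σ.symm v, hc⟩).2
    simp at this; exact this hv
  unfold cFix
  apply Finset.card_bij (fun f _ => f ∘ σ)
  · intro f hf
    simp only [mem_filter] at hf ⊢
    exact ⟨comp_mem_labelings hf.1 σ, fun v hv => hf.2 _ (hmem v hv)⟩
  · intro f _ g _ hfg
    funext x
    have := congrFun hfg (σ.symm x)
    simpa using this
  · intro g hg
    refine ⟨g ∘ σ.symm, ?_, ?_⟩
    · simp only [mem_filter] at hg ⊢
      exact ⟨comp_mem_labelings hg.1 σ.symm, fun v hv => hg.2 _ (hmem' v hv)⟩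
    · funext x; simp

lemma sum_cFix (n : Fin K → ℕ) (i : Fin K) (s : ℕ) :
    ∑ S ∈ Finset.powersetCard s (Finset.univ : Finset V), cFix n i S
      = (n i).choose s * (labelings (V := V) n).card := by
  classical
  unfold cFix
  simp only [Finset.card_filter]
  rw [Finset.sum_comm]
  rw [Finset.sum_congr rfl (fun f hf => ?_), Finset.sum_const, smul_eq_mul, mul_comm]
  have hni : (Finset.univ.filter fun x => f x = i).card = n i := by
    simp only [labelings, mem_filter] at hf; exact hf.2 i
  rw [← Finset.card_filter]
  have : (Finset.powersetCard s (Finset.univ : Finset V)).filter (fun S => ∀ v ∈ S, f v = i)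
      = Finset.powersetCard s (Finset.univ.filter fun x => f x = i) := by
    ext S
    simp only [mem_filter, Finset.mem_powersetCard]
    constructor
    · rintro ⟨⟨_, hc⟩, h2⟩
      exact ⟨fun x hx => by simp [h2 _ hx], hc⟩
    · rintro ⟨h1, hc⟩
      exact ⟨⟨fun x _ => mem_univ _, hc⟩, fun v hv => (Finset.mem_filter.mp (h1 hv)).2⟩
  rw [this, Finset.card_powersetCard, hni]

lemma cFix_eq (n : Fin K → ℕ) (i : Fin K) {S : Finset V} {s : ℕ} (h : S.card = s) :
    (Fintype.card V).choose s * cFix n i S = (n i).choose s * (labelings (V := V) n).card := by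
  classical
  have := sum_cFix (V := V) n i s
  rw [Finset.sum_congr rfl (fun T hT => cFix_congr n i
      ((Finset.mem_powersetCard.mp hT).2.trans h.symm) )] at this
  rw [Finset.sum_const, smul_eq_mul, Finset.card_powersetCard, Finset.card_univ] at this
  exact this

lemma labelings_nonempty {n : Fin K → ℕ} (hsum : ∑ k, n k = Fintype.card V) :
    (labelings (V := V) n).Nonempty := by
  classical
  have hcard : Fintype.card (Σ k : Fin K, Fin (n k)) = Fintype.card V := by
    simp [Fintype.card_sigma, hsum]
  obtain ⟨e⟩ := Fintype.card_eq.mp hcard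
  refine ⟨fun v => (e.symm v).1, ?_⟩
  simp only [labelings, mem_filter, mem_univ, true_and]
  intro k
  have himg : (Finset.univ.filter fun v => (e.symm v).1 = k)
      = Finset.image e ((Finset.univ : Finset (Σ j : Fin K, Fin (n j))).filter fun p => p.1 = k) := by
    ext v
    simp only [mem_filter, mem_univ, true_and, Finset.mem_image]
    constructor
    · intro h; exact ⟨e.symm v, by simpa using h, by simp⟩
    · rintro ⟨p, hp, rfl⟩
      have : p.1 = k := by simpa using hp
      simpa using this
  rw [himg, Finset.card_image_of_injective _ e.injective, Finset.card_filter]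
  rw [← Finset.univ_sigma_univ, Finset.sum_sigma]
  rw [Finset.sum_congr rfl (fun j _ => ?_), Finset.sum_ite_eq' Finset.univ k (fun j => n j)]
  · simp
  · split <;> simp_all

lemma map_eq_iff (f : V → Fin K) (e : Sym2 V) (i : Fin K) :
    Sym2.map f e = s(i,i) ↔ ∀ v ∈ everts e, f v = i := by
  induction e with | _ a b =>
  simp only [Sym2.map_pair_eq, Sym2.eq_iff, everts_mk]
  constructor
  · rintro (⟨h1,h2⟩|⟨h1,h2⟩) <;> intro v hv <;> rcases Finset.mem_insert.mp hv with rfl|hv <;>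
      simp_all
  · intro h; left; exact ⟨h a (by simp), h b (by simp)⟩

lemma Rcount_cast (G : SimpleGraph V) [DecidableRel G.Adj] (f : V → Fin K) (i : Fin K) :
    (Rcount G f i i : ℝ) = ∑ e ∈ G.edgeFinset, (if ∀ v ∈ everts e, f v = i then (1:ℝ) else 0) := by
  rw [Finset.sum_boole, Rcount]
  congr 1
  apply congrArg
  exact Finset.filter_congr (fun e _ => by rw [map_eq_iff f e i])

lemma sum_ind (n : Fin K → ℕ) (i : Fin K) (S : Finset V) :
    ∑ f ∈ labelings n, (if ∀ v ∈ S, f v = i then (1:ℝ) else 0) = cFix n i S := by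
  rw [Finset.sum_boole, cFix]

lemma cFix_ratio (n : Fin K → ℕ) (i : Fin K) {S : Finset V} {s : ℕ} (hS : S.card = s)
    (hs : s ≤ Fintype.card V) :
    (cFix n i S : ℝ) = (n i).descFactorial s / (Fintype.card V).descFactorial s
      * (labelings (V := V) n).card := by
  have h := cFix_eq n i hS
  have h2 : (Fintype.card V).descFactorial s * cFix n i S
      = (n i).descFactorial s * (labelings (V := V) n).card := by
    rw [Nat.descFactorial_eq_factorial_mul_choose, Nat.descFactorial_eq_factorial_mul_choose]
    rw [mul_assoc, h, mul_assoc]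
  have hpos : (0:ℝ) < (Fintype.card V).descFactorial s := by
    have := Nat.pos_of_ne_zero (fun hz => by exact absurd (Nat.descFactorial_eq_zero_iff_lt.mp hz) (not_lt.mpr hs))
    exact_mod_cast this
  field_simp
  rw [mul_comm ((cFix n i S : ℝ))]
  exact_mod_cast h2

section Graph
variable (G : SimpleGraph V) [DecidableRel G.Adj]

lemma not_isDiag_of_mem_edgeFinset {e : Sym2 V} (he : e ∈ G.edgeFinset) : ¬ e.IsDiag :=
  G.not_isDiag_of_mem_edgeSet (SimpleGraph.mem_edgeFinset.mp he)

lemma card_everts_edge {e : Sym2 V} (he : e ∈ G.edgeFinset) : (everts e).card = 2 := by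
  induction e with | _ a b =>
  have := not_isDiag_of_mem_edgeFinset G he
  rw [Sym2.mk_isDiag_iff] at this
  exact card_everts this

lemma card_union_of_shared {e e' : Sym2 V} (he : e ∈ G.edgeFinset) (he' : e' ∈ G.edgeFinset)
    (hne : e ≠ e') (hsh : ¬ Disjoint (everts e) (everts e')) :
    (everts e ∪ everts e').card = 3 := by
  have hint : (everts e ∩ everts e').card = 1 := by
    have h1 : 1 ≤ (everts e ∩ everts e').card := by
      rcases Finset.not_disjoint_iff.mp hsh with ⟨a, ha, ha'⟩
      exact Finset.card_pos.mpr ⟨a, Finset.mem_inter.mpr ⟨ha, ha'⟩⟩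
    have h2 : (everts e ∩ everts e').card ≤ 1 := by
      apply Finset.card_le_one.mpr
      intro a ha b hb
      by_contra hab
      simp only [Finset.mem_inter, mem_everts] at ha hb
      exact hne (eq_of_two_mem (not_isDiag_of_mem_edgeFinset G he)
        (not_isDiag_of_mem_edgeFinset G he') hab ha.1 hb.1 ha.2 hb.2)
    omega
  have := Finset.card_union_add_card_inter (everts e) (everts e')
  rw [card_everts_edge G he, card_everts_edge G he', hint] at this
  omega

lemma card_union_of_disjoint {e e' : Sym2 V} (he : e ∈ G.edgeFinset) (he' : e' ∈ G.edgeFinset)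
    (hd : Disjoint (everts e) (everts e')) :
    (everts e ∪ everts e').card = 4 := by
  rw [Finset.card_union_of_disjoint hd, card_everts_edge G he, card_everts_edge G he']

lemma card_shared :
    (((G.edgeFinset ×ˢ G.edgeFinset)).filter
        fun p => p.1 ≠ p.2 ∧ ¬ Disjoint (everts p.1) (everts p.2)).card
      = ∑ t : V, (G.degree t * G.degree t - G.degree t) := by
  classical
  have hset : (((G.edgeFinset ×ˢ G.edgeFinset)).filter
        fun p => p.1 ≠ p.2 ∧ ¬ Disjoint (everts p.1) (everts p.2))
      = Finset.univ.biUnion (fun t : V => (G.incidenceFinset t).offDiag) := by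
    ext p
    simp only [Finset.mem_filter, Finset.mem_product, Finset.mem_biUnion, Finset.mem_offDiag,
      SimpleGraph.incidenceFinset_eq_filter, Finset.not_disjoint_iff, mem_everts, mem_univ,
      true_and]
    constructor
    · rintro ⟨⟨h1, h2⟩, hne, t, ht1, ht2⟩
      exact ⟨t, ⟨h1, ht1⟩, ⟨h2, ht2⟩, hne⟩
    · rintro ⟨t, ⟨h1, ht1⟩, ⟨h2, ht2⟩, hne⟩
      exact ⟨⟨h1, h2⟩, hne, t, ht1, ht2⟩
  rw [hset, Finset.card_biUnion]
  · apply Finset.sum_congr rfl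
    intro t _
    rw [Finset.offDiag_card, SimpleGraph.card_incidenceFinset_eq_degree]
  · intro t _ t' _ htt'
    rw [Function.onFun, Finset.disjoint_left]
    rintro p hp hp'
    simp only [Finset.mem_offDiag, SimpleGraph.mem_incidenceFinset] at hp hp'
    obtain ⟨⟨he1, ht1⟩, ⟨he2, ht2⟩, hne⟩ := hp
    obtain ⟨⟨_, ht1'⟩, ⟨_, ht2'⟩, _⟩ := hp'
    exact hne (eq_of_two_mem (G.not_isDiag_of_mem_edgeSet he1)
      (G.not_isDiag_of_mem_edgeSet he2) htt' ht1 ht1' ht2 ht2')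

end Graph

lemma df2 (a : ℕ) : ((a.descFactorial 2 : ℕ) : ℝ) = a * (a - 1) := by
  rw [← descPochhammer_eval_eq_descFactorial]
  simp [descPochhammer_succ_right]

lemma df3 (a : ℕ) : ((a.descFactorial 3 : ℕ) : ℝ) = a * (a - 1) * (a - 2) := by
  rw [← descPochhammer_eval_eq_descFactorial]
  simp [descPochhammer_succ_right]

lemma df4 (a : ℕ) : ((a.descFactorial 4 : ℕ) : ℝ) = a * (a - 1) * (a - 2) * (a - 3) := by
  rw [← descPochhammer_eval_eq_descFactorial]
  simp [descPochhammer_succ_right]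

lemma union_forall_iff (S T : Finset V) (f : V → Fin K) (i : Fin K) :
    (∀ v ∈ S ∪ T, f v = i) ↔ (∀ v ∈ S, f v = i) ∧ (∀ v ∈ T, f v = i) := by
  simp [Finset.mem_union, or_imp, forall_and]

lemma sum_sq (G : SimpleGraph V) [DecidableRel G.Adj] (n : Fin K → ℕ) (i : Fin K) :
    ∑ f ∈ labelings n, (Rcount G f i i : ℝ) ^ 2
      = ∑ p ∈ G.edgeFinset ×ˢ G.edgeFinset, (cFix n i (everts p.1 ∪ everts p.2) : ℝ) := by
  have step : ∀ f, (Rcount G f i i : ℝ) ^ 2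
      = ∑ p ∈ G.edgeFinset ×ˢ G.edgeFinset,
          (if ∀ v ∈ everts p.1 ∪ everts p.2, f v = i then (1:ℝ) else 0) := by
    intro f
    rw [sq, Rcount_cast, Finset.sum_mul_sum, ← Finset.sum_product']
    apply Finset.sum_congr rfl
    intro p _
    rw [ite_zero_mul_ite_zero, one_mul]
    congr 1
    rw [eq_iff_iff, union_forall_iff]
  simp_rw [step]
  rw [Finset.sum_comm]
  exact Finset.sum_congr rfl fun p _ => sum_ind n i _

lemma sum_first (G : SimpleGraph V) [DecidableRel G.Adj] (n : Fin K → ℕ) (i : Fin K) :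
    ∑ f ∈ labelings n, (Rcount G f i i : ℝ)
      = ∑ e ∈ G.edgeFinset, (cFix n i (everts e) : ℝ) := by
  simp_rw [Rcount_cast]
  rw [Finset.sum_comm]
  exact Finset.sum_congr rfl fun e _ => sum_ind n i _

lemma covar_self (n : Fin K → ℕ) (X : (V → Fin K) → ℝ)
    (hne : (labelings (V := V) n).Nonempty) :
    covar n X X = _root_.expect n (fun f => X f ^ 2) - (_root_.expect n X) ^ 2 := by
  have hLc : ((labelings (V := V) n).card : ℝ) ≠ 0 := by
    exact_mod_cast Finset.card_ne_zero_of_mem hne.choose_spec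
  set c := _root_.expect n X with hc
  have hcs : c * (labelings (V := V) n).card = ∑ f ∈ labelings n, X f := by
    rw [hc]; unfold _root_.expect; field_simp
  unfold covar
  rw [← hc]
  unfold _root_.expect
  have expand : ∀ f, (X f - c) * (X f - c) = X f ^ 2 - 2 * c * X f + c ^ 2 := fun f => by ring
  simp_rw [expand]
  rw [Finset.sum_add_distrib, Finset.sum_sub_distrib, ← Finset.mul_sum, Finset.sum_const,
    nsmul_eq_mul, ← hcs]
  field_simp
  ring


set_option maxHeartbeats 1000000 in
theorem stmt_8 (G : SimpleGraph V) [DecidableRel G.Adj]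
    (n : Fin K → ℕ) (N : ℕ) (hN : N = Fintype.card V) (hN4 : 4 ≤ N)
    (hsum : ∑ k, n k = N) (i : Fin K)
    (m D p2 p3 p4 : ℝ)
    (hm : m = (G.edgeFinset.card : ℝ))
    (hD : D = ∑ t : V, (G.degree t : ℝ) ^ 2)
    (hp2 : p2 = (n i : ℝ) * ((n i : ℝ) - 1) / ((N : ℝ) * ((N : ℝ) - 1)))
    (hp3 : p3 = (n i : ℝ) * ((n i : ℝ) - 1) * ((n i : ℝ) - 2)
        / ((N : ℝ) * ((N : ℝ) - 1) * ((N : ℝ) - 2)))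
    (hp4 : p4 = (n i : ℝ) * ((n i : ℝ) - 1) * ((n i : ℝ) - 2) * ((n i : ℝ) - 3)
        / ((N : ℝ) * ((N : ℝ) - 1) * ((N : ℝ) - 2) * ((N : ℝ) - 3))) :
    expect n (fun f : V → Fin K => ((Rcount G f i i : ℝ)) ^ 2)
        = m * p2 + (D - 2 * m) * p3 + (m ^ 2 - D + m) * p4
    ∧ covar n (fun f : V → Fin K => (Rcount G f i i : ℝ))
        (fun f : V → Fin K => (Rcount G f i i : ℝ))
        = m * p2 + (D - 2 * m) * p3 + (m ^ 2 - D + m) * p4 - (m * p2) ^ 2 := by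
  classical
  have hne : (labelings (V := V) n).Nonempty := labelings_nonempty (hsum.trans hN)
  have hLc : (((labelings (V := V) n).card : ℝ)) ≠ 0 := by
    exact_mod_cast Finset.card_ne_zero_of_mem hne.choose_spec
  have hcard2 : ∀ S : Finset V, S.card = 2 →
      (cFix n i S : ℝ) = p2 * (labelings (V := V) n).card := by
    intro S hS
    rw [cFix_ratio n i hS (by omega), ← hN, df2, df2, hp2]
  have hcard3 : ∀ S : Finset V, S.card = 3 →
      (cFix n i S : ℝ) = p3 * (labelings (V := V) n).card := by
    intro S hS
    rw [cFix_ratio n i hS (by omega), ← hN, df3, df3, hp3]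
  have hcard4 : ∀ S : Finset V, S.card = 4 →
      (cFix n i S : ℝ) = p4 * (labelings (V := V) n).card := by
    intro S hS
    rw [cFix_ratio n i hS (by omega), ← hN, df4, df4, hp4]
  set P := G.edgeFinset ×ˢ G.edgeFinset with hPdef
  -- the three classes
  set A1 := P.filter (fun p => p.1 = p.2) with hA1
  set B := P.filter (fun p => ¬ p.1 = p.2) with hB
  set A3 := B.filter (fun p => Disjoint (everts p.1) (everts p.2)) with hA3
  set A2 := B.filter (fun p => ¬ Disjoint (everts p.1) (everts p.2)) with hA2
  have hA1card : A1.card = G.edgeFinset.card := by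
    rw [hA1, show P.filter (fun p => p.1 = p.2) = G.edgeFinset.diag from by
      ext ⟨a, b⟩; simp only [hPdef, Finset.mem_filter, Finset.mem_product, Finset.mem_diag]
      constructor <;> rintro ⟨h1, rfl⟩ <;> simp_all, Finset.diag_card]
  have hA2card : A2.card = ∑ t : V, (G.degree t * G.degree t - G.degree t) := by
    rw [hA2, hB, Finset.filter_filter, ← card_shared G]
  have hcount : A1.card + (A3.card + A2.card) = G.edgeFinset.card ^ 2 := by
    have c0 : A1.card + B.card = P.card :=
      Finset.card_filter_add_card_filter_not (fun p : Sym2 V × Sym2 V => p.1 = p.2)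
    have c1 : A3.card + A2.card = B.card :=
      Finset.card_filter_add_card_filter_not (fun p : Sym2 V × Sym2 V => Disjoint (everts p.1) (everts p.2))
    rw [c1, c0, hPdef, Finset.card_product, sq]
  -- cast the shared count
  have hddle : ∀ d : ℕ, d ≤ d * d := fun d => by nlinarith [Nat.zero_le d]
  have hA2cast : (A2.card : ℝ) = D - 2 * m := by
    rw [hA2card, Nat.cast_sum]
    rw [Finset.sum_congr rfl (fun t _ => Nat.cast_sub (hddle (G.degree t)))]
    rw [Finset.sum_sub_distrib]
    have h1 : ∑ t : V, ((G.degree t : ℝ) * (G.degree t : ℝ)) = D := by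
      rw [hD]; exact Finset.sum_congr rfl fun t _ => by push_cast; ring
    have h2 : ∑ t : V, (G.degree t : ℝ) = 2 * m := by
      rw [hm]
      exact_mod_cast congrArg (Nat.cast (R := ℝ)) (G.sum_degrees_eq_twice_card_edges)
    push_cast
    rw [h1, h2]
  have hA3cast : (A3.card : ℝ) = m ^ 2 - D + m := by
    have := hcount
    have hc : ((A1.card + (A3.card + A2.card) : ℕ) : ℝ) = ((G.edgeFinset.card ^ 2 : ℕ) : ℝ) := by
      exact_mod_cast congrArg (Nat.cast (R := ℝ)) this
    push_cast at hc
    rw [hA1card] at this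
    have hA1c : (A1.card : ℝ) = m := by rw [hA1card, hm]
    push_cast at hc ⊢
    nlinarith [hc, hA1c, hA2cast, hm]
  -- second moment sum
  have hsum2 : ∑ f ∈ labelings n, (Rcount G f i i : ℝ) ^ 2
      = (m * p2 + (D - 2 * m) * p3 + (m ^ 2 - D + m) * p4) * (labelings (V := V) n).card := by
    rw [sum_sq G n i, ← hPdef]
    rw [← Finset.sum_filter_add_sum_filter_not P (fun p => p.1 = p.2)
        (fun p => (cFix n i (everts p.1 ∪ everts p.2) : ℝ))]
    rw [← Finset.sum_filter_add_sum_filter_not (P.filter fun p => ¬ p.1 = p.2)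
        (fun p => Disjoint (everts p.1) (everts p.2))
        (fun p => (cFix n i (everts p.1 ∪ everts p.2) : ℝ))]
    have t1 : ∑ p ∈ A1, (cFix n i (everts p.1 ∪ everts p.2) : ℝ)
        = A1.card * (p2 * (labelings (V := V) n).card) := by
      rw [Finset.sum_congr rfl (fun p hp => ?_), Finset.sum_const, nsmul_eq_mul]
      obtain ⟨hpP, hpe⟩ := Finset.mem_filter.mp hp
      obtain ⟨h1, _⟩ := Finset.mem_product.mp hpP
      rw [← hpe, Finset.union_self]
      exact hcard2 _ (card_everts_edge G h1)
    have t3 : ∑ p ∈ A3, (cFix n i (everts p.1 ∪ everts p.2) : ℝ)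
        = A3.card * (p4 * (labelings (V := V) n).card) := by
      rw [Finset.sum_congr rfl (fun p hp => ?_), Finset.sum_const, nsmul_eq_mul]
      obtain ⟨hpB, hpd⟩ := Finset.mem_filter.mp hp
      obtain ⟨hpP, hpne⟩ := Finset.mem_filter.mp hpB
      obtain ⟨h1, h2⟩ := Finset.mem_product.mp hpP
      exact hcard4 _ (card_union_of_disjoint G h1 h2 hpd)
    have t2 : ∑ p ∈ A2, (cFix n i (everts p.1 ∪ everts p.2) : ℝ)
        = A2.card * (p3 * (labelings (V := V) n).card) := by
      rw [Finset.sum_congr rfl (fun p hp => ?_), Finset.sum_const, nsmul_eq_mul]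
      obtain ⟨hpB, hpd⟩ := Finset.mem_filter.mp hp
      obtain ⟨hpP, hpne⟩ := Finset.mem_filter.mp hpB
      obtain ⟨h1, h2⟩ := Finset.mem_product.mp hpP
      exact hcard3 _ (card_union_of_shared G h1 h2 hpne hpd)
    rw [show (P.filter fun p => p.1 = p.2) = A1 from rfl]
    rw [show ((P.filter fun p => ¬ p.1 = p.2).filter
        fun p => Disjoint (everts p.1) (everts p.2)) = A3 from rfl]
    rw [show ((P.filter fun p => ¬ p.1 = p.2).filter
        fun p => ¬ Disjoint (everts p.1) (everts p.2)) = A2 from rfl]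
    rw [t1, t2, t3]
    have hA1c : (A1.card : ℝ) = m := by rw [hA1card, hm]
    rw [hA1c, hA2cast, hA3cast]
    ring
  have part1 : _root_.expect n (fun f : V → Fin K => ((Rcount G f i i : ℝ)) ^ 2)
      = m * p2 + (D - 2 * m) * p3 + (m ^ 2 - D + m) * p4 := by
    unfold _root_.expect
    rw [hsum2]
    field_simp
  have hEX : _root_.expect n (fun f : V → Fin K => (Rcount G f i i : ℝ)) = m * p2 := by
    unfold _root_.expect
    rw [sum_first G n i,
      Finset.sum_congr rfl (fun e he => hcard2 _ (card_everts_edge G he)),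
      Finset.sum_const, nsmul_eq_mul, ← hm]
    field_simp
  refine ⟨part1, ?_⟩
  rw [covar_self n _ hne, part1, hEX]
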